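/- Infinite-memory ε-best-responses may be necessary: There exists a mean-payoff game G, an ε > 0, and a Player 0 strategy σ₀ such that the set BR₁^ε(σ₀) of ε-best-responses of Player 1 is nonempty but contains no finite-memory strategy. -/

import Mathlib

open Filter

namespace MPG

variable {V : Type}

/-- A strategy maps histories (finite sequences of visited vertices, last = current) to a next vertex. -/
abbrev Strat (V : Type) := List V → V

/-- A bi-weighted mean-payoff game: finite directed graph with every vertex having a successor,
a partition of vertices between the players (`owner0`), and two weight functions. -/
structure Game (V : Type) where
  E : V → V → Prop
  succ : ∀ v, ∃ v', E v v'
  owner0 : V → Bool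
  w0 : V → V → ℝ
  w1 : V → V → ℝ

/-- A valid Player-0 strategy respects the edges at Player-0 vertices. -/
def Game.Valid0 (G : Game V) (σ : Strat V) : Prop :=
  ∀ (h : List V) (u : V), h.getLast? = some u → G.owner0 u = true → G.E u (σ h)

/-- A valid Player-1 strategy respects the edges at Player-1 vertices. -/
def Game.Valid1 (G : Game V) (σ : Strat V) : Prop :=
  ∀ (h : List V) (u : V), h.getLast? = some u → G.owner0 u = false → G.E u (σ h)

/-- Finite prefixes of the unique outcome of a strategy profile from `v`. -/
def outPrefix (G : Game V) (σ0 σ1 : Strat V) (v : V) : ℕ → List V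
  | 0 => [v]
  | n + 1 =>
      outPrefix G σ0 σ1 v n ++
        [if G.owner0 ((outPrefix G σ0 σ1 v n).getLastD v) then
            σ0 (outPrefix G σ0 σ1 v n)
          else σ1 (outPrefix G σ0 σ1 v n)]

/-- The unique outcome play `Out_v(σ0,σ1)`. -/
def outcome (G : Game V) (σ0 σ1 : Strat V) (v : V) (n : ℕ) : V :=
  (outPrefix G σ0 σ1 v n).getLastD v

/-- liminf mean-payoff of a play for a weight function. -/
noncomputable def mp (w : V → V → ℝ) (π : ℕ → V) : ℝ :=
  Filter.liminf (fun k : ℕ => (∑ i ∈ Finset.range k, w (π i) (π (i + 1))) / (k : ℝ))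
    Filter.atTop

/-- The ε-best-responses of Player 1 to a Player-0 strategy `σ0`. -/
def BR (G : Game V) (ε : ℝ) (σ0 : Strat V) : Set (Strat V) :=
  {σ1 | G.Valid1 σ1 ∧ ∀ (v : V) (σ1' : Strat V), G.Valid1 σ1' →
      mp G.w1 (outcome G σ0 σ1 v) > mp G.w1 (outcome G σ0 σ1' v) - ε}

/-- `ASV^ε(σ0)(v)`: value of `σ0` against ε-best responses. -/
noncomputable def ASVe (G : Game V) (ε : ℝ) (σ0 : Strat V) (v : V) : ℝ :=
  sInf ((fun σ1 => mp G.w0 (outcome G σ0 σ1 v)) '' BR G ε σ0)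

/-- `ASV^ε(v)`: the ε-adversarial Stackelberg value. -/
noncomputable def ASVeV (G : Game V) (ε : ℝ) (v : V) : ℝ :=
  sSup {x : ℝ | ∃ σ0 : Strat V, G.Valid0 σ0 ∧ x = ASVe G ε σ0 v}

/-- `ASV(σ0)(v) = sup_{ε>0} ASV^ε(σ0)(v)`. -/
noncomputable def ASVs (G : Game V) (σ0 : Strat V) (v : V) : ℝ :=
  sSup {x : ℝ | ∃ ε : ℝ, 0 < ε ∧ x = ASVe G ε σ0 v}

/-- Zero-sum worst-case value of a Player-0 strategy. -/
noncomputable def Val (G : Game V) (σ0 : Strat V) (v : V) : ℝ :=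
  sInf {x : ℝ | ∃ σ1 : Strat V, G.Valid1 σ1 ∧ x = mp G.w0 (outcome G σ0 σ1 v)}

/-- `H ∈ G^{±δ}`: same arena, every edge weight changed by strictly less than δ. -/
def Perturbed (G H : Game V) (δ : ℝ) : Prop :=
  H.E = G.E ∧ H.owner0 = G.owner0 ∧
    ∀ u v : V, G.E u v → |H.w0 u v - G.w0 u v| < δ ∧ |H.w1 u v - G.w1 u v| < δ

/-- A finite-memory strategy: realizable by a finite-state machine reading the history. -/
def FinMem (σ : Strat V) : Prop :=
  ∃ (M : Type) (_ : Fintype M) (m0 : M) (upd : M → V → M) (o : M → V),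
    ∀ h : List V, σ h = o (List.foldl upd m0 h)

/-- A vertex is `(c,d)^ε`-bad if Player 1 can enforce `MP₀ ≤ c ∧ MP₁ > d - ε` from it. -/
def Bad (G : Game V) (c d ε : ℝ) (v : V) : Prop :=
  ∃ σ1 : Strat V, G.Valid1 σ1 ∧ ∀ σ0 : Strat V, G.Valid0 σ0 →
    mp G.w0 (outcome G σ0 σ1 v) ≤ c ∧ mp G.w1 (outcome G σ0 σ1 v) > d - ε

end MPG
namespace Stmt14Aux

inductive Vtx : Type
  | p | q0 | q1 | c
deriving DecidableEq

instance : Fintype Vtx :=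
  ⟨{Vtx.p, Vtx.q0, Vtx.q1, Vtx.c}, fun x => by cases x <;> simp⟩

open Vtx

def bq (b : Bool) : Vtx := if b then q1 else q0

def rho (n : ℕ) : Bool := Nat.sqrt n * Nat.sqrt n == n

def ppi : Vtx → ℕ → Vtx
  | v, 0 => v
  | Vtx.p, (n+1) => if (n+1) % 2 = 0 then Vtx.p else bq (rho ((n+1) / 2))
  | Vtx.c, _ => Vtx.c
  | _, (n+1) => if (n+1) % 2 = 1 then Vtx.p else bq (rho ((n+1) / 2 - 1))

def Good (v : Vtx) : Prop := v = Vtx.p ∨ v = Vtx.q0 ∨ v = Vtx.q1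

lemma bq_ne_c (b : Bool) : bq b ≠ Vtx.c := by cases b <;> simp [bq]
lemma bq_ne_p (b : Bool) : bq b ≠ Vtx.p := by cases b <;> simp [bq]
lemma bq_inj {a b : Bool} (h : bq a = bq b) : a = b := by
  cases a <;> cases b <;> simp_all [bq]

lemma ppi_p (n : ℕ) : ppi Vtx.p n = if n % 2 = 0 then Vtx.p else bq (rho (n / 2)) := by
  cases n with
  | zero => rfl
  | succ m => simp [ppi]

lemma ppi_q0 (n : ℕ) :
    ppi Vtx.q0 n = if n = 0 then Vtx.q0 else
      if n % 2 = 1 then Vtx.p else bq (rho (n / 2 - 1)) := by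
  cases n with
  | zero => rfl
  | succ m => simp [ppi]

lemma ppi_q1 (n : ℕ) :
    ppi Vtx.q1 n = if n = 0 then Vtx.q1 else
      if n % 2 = 1 then Vtx.p else bq (rho (n / 2 - 1)) := by
  cases n with
  | zero => rfl
  | succ m => simp [ppi]

lemma ppi_zero (v : Vtx) : ppi v 0 = v := by cases v <;> rfl

lemma ppi_ne_c {v : Vtx} (hv : Good v) (n : ℕ) : ppi v n ≠ Vtx.c := by
  rcases hv with rfl | rfl | rfl
  · rw [ppi_p]; split <;> simp [bq_ne_c]
  · rw [ppi_q0]; split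
    · simp
    · split <;> simp [bq_ne_c]
  · rw [ppi_q1]; split
    · simp
    · split <;> simp [bq_ne_c]

lemma ppi_cases {v : Vtx} (hv : Good v) (n : ℕ) :
    ppi v n = Vtx.p ∨ ppi v n = Vtx.q0 ∨ ppi v n = Vtx.q1 := by
  have := ppi_ne_c hv n
  cases h : ppi v n <;> simp_all

lemma ppi_decision {v : Vtx} (hv : Good v) {n : ℕ} (h : ppi v n = Vtx.p) :
    ppi v (n+1) = bq (rho (n / 2)) := by
  rcases hv with rfl | rfl | rfl
  · rw [ppi_p] at h
    have hn : n % 2 = 0 := by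
      by_contra hn; rw [if_neg hn] at h; exact bq_ne_p _ h
    rw [ppi_p, if_neg (by omega)]
    congr 1; congr 1; omega
  · rw [ppi_q0] at h
    have hn : n % 2 = 1 := by
      by_contra hn
      rcases Nat.eq_zero_or_pos n with rfl | hpos
      · simp at h
      · rw [if_neg (by omega), if_neg hn] at h; exact bq_ne_p _ h
    rw [ppi_q0, if_neg (by omega), if_neg (by omega)]
    congr 1; congr 1; omega
  · rw [ppi_q1] at h
    have hn : n % 2 = 1 := by
      by_contra hn
      rcases Nat.eq_zero_or_pos n with rfl | hpos
      · simp at h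
      · rw [if_neg (by omega), if_neg hn] at h; exact bq_ne_p _ h
    rw [ppi_q1, if_neg (by omega), if_neg (by omega)]
    congr 1; congr 1; omega

lemma ppi_after_q {v : Vtx} (hv : Good v) {n : ℕ} (h : ppi v n ≠ Vtx.p) :
    ppi v (n+1) = Vtx.p := by
  rcases hv with rfl | rfl | rfl
  · rw [ppi_p] at h
    have hn : n % 2 = 1 := by by_contra hn; exact h (if_pos (by omega))
    rw [ppi_p, if_pos (by omega)]
  · rw [ppi_q0] at h
    have hn : n % 2 = 0 := by
      by_contra hn
      exact h (by rw [if_neg (by omega), if_pos (by omega)])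
    rw [ppi_q0, if_neg (by omega), if_pos (by omega)]
  · rw [ppi_q1] at h
    have hn : n % 2 = 0 := by
      by_contra hn
      exact h (by rw [if_neg (by omega), if_pos (by omega)])
    rw [ppi_q1, if_neg (by omega), if_pos (by omega)]

def pref (v : Vtx) (n : ℕ) : List Vtx := (List.range n).map (ppi v)

lemma pref_succ (v : Vtx) (n : ℕ) : pref v (n+1) = pref v n ++ [ppi v n] := by
  simp [pref, List.range_succ]

lemma length_pref (v : Vtx) (n : ℕ) : (pref v n).length = n := by simp [pref]

lemma getLast?_pref (v : Vtx) (n : ℕ) : (pref v (n+1)).getLast? = some (ppi v n) := by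
  rw [pref_succ]; exact List.getLast?_concat

lemma getLastD_pref (v : Vtx) (n : ℕ) (d : Vtx) : (pref v (n+1)).getLastD d = ppi v n := by
  rw [pref_succ, List.getLastD_concat]

lemma head?_pref (v : Vtx) (n : ℕ) : (pref v (n+1)).head? = some v := by
  simp [pref, List.range_succ_eq_map, ppi_zero]


open MPG Vtx

def IsPre (h : List Vtx) : Prop :=
  h = pref Vtx.p h.length ∨ h = pref Vtx.q0 h.length ∨ h = pref Vtx.q1 h.length

instance (h : List Vtx) : Decidable (IsPre h) := by
  unfold IsPre; infer_instance

def sig0 (h : List Vtx) : Vtx :=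
  match h.getLast? with
  | some Vtx.c => Vtx.c
  | some Vtx.q0 => if IsPre h then Vtx.p else Vtx.c
  | some Vtx.q1 => if IsPre h then Vtx.p else Vtx.c
  | _ => Vtx.p

def sig1 (h : List Vtx) : Vtx := bq (rho ((h.length - 1) / 2))

def Gm : Game Vtx where
  E u v := match u, v with
    | Vtx.p, Vtx.q0 => True
    | Vtx.p, Vtx.q1 => True
    | Vtx.q0, Vtx.p => True
    | Vtx.q1, Vtx.p => True
    | Vtx.q0, Vtx.c => True
    | Vtx.q1, Vtx.c => True
    | Vtx.c, Vtx.c => True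
    | _, _ => False
  succ v := by cases v
                 <;> first
                  | exact ⟨Vtx.q0, trivial⟩
                  | exact ⟨Vtx.p, trivial⟩
                  | exact ⟨Vtx.c, trivial⟩
  owner0 v := match v with
    | Vtx.p => false
    | _ => true
  w0 _ _ := 0
  w1 _ v := if v = Vtx.c then 0 else 1

lemma owner0_p : Gm.owner0 Vtx.p = false := rfl
lemma owner0_q0 : Gm.owner0 Vtx.q0 = true := rfl
lemma owner0_q1 : Gm.owner0 Vtx.q1 = true := rfl
lemma owner0_c : Gm.owner0 Vtx.c = true := rfl

lemma E_p_iff (x : Vtx) : Gm.E Vtx.p x ↔ (x = Vtx.q0 ∨ x = Vtx.q1) := by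
  cases x <;> simp [Gm]

lemma sig0_last_c {h : List Vtx} (hl : h.getLast? = some Vtx.c) : sig0 h = Vtx.c := by
  unfold sig0; rw [hl]

lemma sig0_last_q0 {h : List Vtx} (hl : h.getLast? = some Vtx.q0) :
    sig0 h = if IsPre h then Vtx.p else Vtx.c := by
  unfold sig0; rw [hl]

lemma sig0_last_q1 {h : List Vtx} (hl : h.getLast? = some Vtx.q1) :
    sig0 h = if IsPre h then Vtx.p else Vtx.c := by
  unfold sig0; rw [hl]

lemma isPre_pref {v : Vtx} (hv : Good v) (n : ℕ) : IsPre (pref v n) := by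
  rcases hv with rfl | rfl | rfl
  · exact Or.inl (by rw [length_pref])
  · exact Or.inr (Or.inl (by rw [length_pref]))
  · exact Or.inr (Or.inr (by rw [length_pref]))

lemma sig0_good {v : Vtx} (hv : Good v) (n : ℕ) (hq : ppi v n ≠ Vtx.p) :
    sig0 (pref v (n+1)) = Vtx.p := by
  rcases ppi_cases hv n with hp | h0 | h1
  · exact absurd hp hq
  · rw [sig0_last_q0 (by rw [getLast?_pref, h0])]
    exact if_pos (isPre_pref hv (n+1))
  · rw [sig0_last_q1 (by rw [getLast?_pref, h1])]
    exact if_pos (isPre_pref hv (n+1))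

lemma valid0_sig0 : Gm.Valid0 sig0 := by
  intro h u hlast howner
  cases u with
  | p => simp [Gm] at howner
  | q0 => rw [sig0_last_q0 hlast]; split <;> trivial
  | q1 => rw [sig0_last_q1 hlast]; split <;> trivial
  | c => rw [sig0_last_c hlast]; trivial

lemma valid1_sig1 : Gm.Valid1 sig1 := by
  intro h u hlast howner
  cases u with
  | p =>
      show Gm.E Vtx.p (bq _)
      cases (rho ((h.length - 1) / 2)) <;> simp [bq] <;> trivial
  | q0 => simp [Gm] at howner
  | q1 => simp [Gm] at howner
  | c => simp [Gm] at howner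

lemma outPrefix_ne_nil (G : Game Vtx) (σ0 σ1 : Strat Vtx) (v : Vtx) (n : ℕ) :
    outPrefix G σ0 σ1 v n ≠ [] := by
  cases n with
  | zero => simp [outPrefix]
  | succ m => simp [outPrefix]

lemma getLast?_of_ne_nil {α : Type} (l : List α) (hl : l ≠ []) (d : α) :
    l.getLast? = some (l.getLastD d) := by
  cases h : l.getLast? with
  | none => exact absurd (List.getLast?_eq_none_iff.mp h) hl
  | some x => rw [List.getLastD_eq_getLast?, h]; rfl

/-- Main outcome correctness: if σ1 follows the intended play at its decision points,
the outcome prefixes are prefixes of the intended play. -/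
lemma outPrefix_eq {v : Vtx} (hv : Good v) (σ1 : Strat Vtx)
    (hfollow : ∀ n, ppi v n = Vtx.p → σ1 (pref v (n+1)) = ppi v (n+1)) :
    ∀ n, outPrefix Gm sig0 σ1 v n = pref v (n+1) := by
  intro n
  induction n with
  | zero => simp [outPrefix, pref, List.range_succ, ppi_zero]
  | succ m ih =>
      show outPrefix Gm sig0 σ1 v m ++ [_] = _
      rw [pref_succ v (m+1), ih, getLastD_pref]
      congr 1
      by_cases hp : ppi v m = Vtx.p
      · rw [hp]
        simp only [owner0_p, Bool.false_eq_true, if_false]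
        exact congrArg (fun x => [x]) (hfollow m hp)
      · have ho : Gm.owner0 (ppi v m) = true := by
          rcases ppi_cases hv m with h | h | h
          · exact absurd h hp
          · rw [h]; rfl
          · rw [h]; rfl
        rw [ho]
        simp only [if_true]
        rw [sig0_good hv m hp, ppi_after_q hv hp]

lemma sig1_follows {v : Vtx} (hv : Good v) :
    ∀ n, ppi v n = Vtx.p → sig1 (pref v (n+1)) = ppi v (n+1) := by
  intro n hp
  rw [ppi_decision hv hp]
  unfold sig1
  rw [length_pref]
  norm_num

lemma outcome_sig1 {v : Vtx} (hv : Good v) (n : ℕ) :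
    outcome Gm sig0 sig1 v n = ppi v n := by
  unfold outcome
  rw [outPrefix_eq hv sig1 (sig1_follows hv), getLastD_pref]

lemma w1_nonneg (u v : Vtx) : 0 ≤ Gm.w1 u v := by
  show (0:ℝ) ≤ if v = Vtx.c then 0 else 1
  split <;> norm_num

lemma w1_le_one (u v : Vtx) : Gm.w1 u v ≤ 1 := by
  show (if v = Vtx.c then (0:ℝ) else 1) ≤ 1
  split <;> norm_num

lemma avg_nonneg (π : ℕ → Vtx) (k : ℕ) :
    0 ≤ (∑ i ∈ Finset.range k, Gm.w1 (π i) (π (i + 1))) / (k : ℝ) :=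
  div_nonneg (Finset.sum_nonneg fun i _ => w1_nonneg _ _) (Nat.cast_nonneg k)

/-- The play never hits the sink: mean payoff is 1. -/
lemma mp_one_of (π : ℕ → Vtx) (h : ∀ n, π n ≠ Vtx.c) : mp Gm.w1 π = 1 := by
  have hw : ∀ i : ℕ, Gm.w1 (π i) (π (i+1)) = 1 := by
    intro i
    show (if π (i+1) = Vtx.c then (0:ℝ) else 1) = 1
    rw [if_neg (h (i+1))]
  have hu : ∀ k : ℕ, 1 ≤ k →
      (∑ i ∈ Finset.range k, Gm.w1 (π i) (π (i + 1))) / (k : ℝ) = 1 := by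
    intro k hk
    rw [Finset.sum_congr rfl fun i _ => hw i, Finset.sum_const, Finset.card_range]
    have : (k:ℝ) ≠ 0 := by positivity
    field_simp
    simp
  have ht : Filter.Tendsto
      (fun k : ℕ => (∑ i ∈ Finset.range k, Gm.w1 (π i) (π (i + 1))) / (k : ℝ))
      Filter.atTop (nhds 1) := by
    apply Filter.Tendsto.congr' _ tendsto_const_nhds
    filter_upwards [Filter.eventually_atTop.mpr ⟨1, fun k hk => hu k hk⟩] with k hk
    exact hk.symm
  exact ht.liminf_eq

/-- The play is eventually in the sink: mean payoff is 0. -/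
lemma mp_zero_of (π : ℕ → Vtx) (N : ℕ) (h : ∀ n, N ≤ n → π n = Vtx.c) :
    mp Gm.w1 π = 0 := by
  have hw0 : ∀ i : ℕ, N ≤ i → Gm.w1 (π i) (π (i+1)) = 0 := by
    intro i hi
    show (if π (i+1) = Vtx.c then (0:ℝ) else 1) = 0
    rw [if_pos (h (i+1) (by omega))]
  have hsum : ∀ k : ℕ, (∑ i ∈ Finset.range k, Gm.w1 (π i) (π (i + 1))) ≤ N := by
    intro k
    calc (∑ i ∈ Finset.range k, Gm.w1 (π i) (π (i + 1)))
        ≤ ∑ i ∈ Finset.range k, (if i < N then (1:ℝ) else 0) := by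
          apply Finset.sum_le_sum
          intro i _
          by_cases hi : i < N
          · rw [if_pos hi]; exact w1_le_one _ _
          · rw [if_neg hi, hw0 i (by omega)]
      _ = ((Finset.range k).filter (· < N)).card := Finset.sum_boole _ _
      _ ≤ N := by
          have hs : (Finset.range k).filter (· < N) ⊆ Finset.range N := by
            intro i hi
            simp only [Finset.mem_filter, Finset.mem_range] at hi ⊢
            exact hi.2
          have := Finset.card_le_card hs
          simp only [Finset.card_range] at this
          exact_mod_cast this
  have ht : Filter.Tendsto
      (fun k : ℕ => (∑ i ∈ Finset.range k, Gm.w1 (π i) (π (i + 1))) / (k : ℝ))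
      Filter.atTop (nhds 0) := by
    apply squeeze_zero (fun k : ℕ => avg_nonneg π k) (g := fun k : ℕ => (N : ℝ) / (k : ℝ))
    · intro k
      exact div_le_div_of_nonneg_right (hsum k) (Nat.cast_nonneg k)
    · exact tendsto_const_div_atTop_nhds_zero_nat (N : ℝ)
  exact ht.liminf_eq

/-- Mean payoff is always at most 1 in this game. -/
lemma mp_le_one (π : ℕ → Vtx) : mp Gm.w1 π ≤ 1 := by
  have hb : Filter.IsBoundedUnder (· ≥ ·) Filter.atTop
      (fun k : ℕ => (∑ i ∈ Finset.range k, Gm.w1 (π i) (π (i + 1))) / (k : ℝ)) :=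
    Filter.isBoundedUnder_of ⟨0, fun k => avg_nonneg π k⟩
  have hcb : Filter.IsCoboundedUnder (· ≥ ·) Filter.atTop (fun _ : ℕ => (1:ℝ)) :=
    Filter.IsBoundedUnder.isCoboundedUnder_ge (Filter.isBoundedUnder_of ⟨1, fun _ => le_rfl⟩)
  have hu : ∀ k : ℕ, (∑ i ∈ Finset.range k, Gm.w1 (π i) (π (i + 1))) / (k : ℝ) ≤ 1 := by
    intro k
    rcases Nat.eq_zero_or_pos k with rfl | hk
    · simp
    · rw [div_le_one (by exact_mod_cast hk)]
      calc (∑ i ∈ Finset.range k, Gm.w1 (π i) (π (i + 1)))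
          ≤ ∑ _i ∈ Finset.range k, (1:ℝ) :=
            Finset.sum_le_sum fun i _ => w1_le_one _ _
        _ = k := by simp
  calc mp Gm.w1 π ≤ Filter.liminf (fun _ : ℕ => (1:ℝ)) Filter.atTop :=
        Filter.liminf_le_liminf (Filter.Eventually.of_forall hu) hb hcb
    _ = 1 := Filter.liminf_const 1

/-- The sink is absorbing under `sig0`. -/
lemma outcome_c_step (σ1 : Strat Vtx) (v : Vtx) (m : ℕ)
    (h : outcome Gm sig0 σ1 v m = Vtx.c) : outcome Gm sig0 σ1 v (m+1) = Vtx.c := by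
  unfold outcome
  show (outPrefix Gm sig0 σ1 v m ++ [_]).getLastD v = Vtx.c
  rw [List.getLastD_concat]
  unfold outcome at h
  rw [h, owner0_c, if_pos rfl]
  exact sig0_last_c (by rw [getLast?_of_ne_nil _ (outPrefix_ne_nil Gm sig0 σ1 v m) v, h])

lemma outcome_c_absorb (σ1 : Strat Vtx) (v : Vtx) (m : ℕ)
    (h : outcome Gm sig0 σ1 v m = Vtx.c) : ∀ n, m ≤ n → outcome Gm sig0 σ1 v n = Vtx.c := by
  intro n hn
  obtain ⟨k, rfl⟩ : ∃ k, n = m + k := ⟨n - m, by omega⟩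
  clear hn
  induction k with
  | zero => exact h
  | succ l ih => exact outcome_c_step σ1 v (m+l) ih

lemma outcome_from_c (σ1 : Strat Vtx) (n : ℕ) : outcome Gm sig0 σ1 Vtx.c n = Vtx.c :=
  outcome_c_absorb σ1 Vtx.c 0 rfl n (Nat.zero_le n)

lemma goodp : Good Vtx.p := Or.inl rfl

/-- If the outcome from `p` never hits the sink, the play follows the intended play. -/
lemma follow_of_no_c (σ1 : Strat Vtx) (hval : Gm.Valid1 σ1)
    (hnc : ∀ m, outcome Gm sig0 σ1 Vtx.p m ≠ Vtx.c) :
    ∀ n, outPrefix Gm sig0 σ1 Vtx.p n = pref Vtx.p (n+1) := by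
  intro n
  induction n with
  | zero => simp [outPrefix, pref, List.range_succ, ppi_zero]
  | succ m ih =>
      show outPrefix Gm sig0 σ1 Vtx.p m ++ [_] = _
      rw [pref_succ Vtx.p (m+1), ih, getLastD_pref]
      congr 1
      by_cases hp : ppi Vtx.p m = Vtx.p
      · rw [hp]
        simp only [owner0_p, Bool.false_eq_true, if_false]
        congr 1
        -- σ1's move must be the intended one, else the play would hit the sink
        obtain ⟨y, hy⟩ : ∃ y, σ1 (pref Vtx.p (m+1)) = y := ⟨_, rfl⟩
        rw [hy]
        have hEy : Gm.E Vtx.p y := by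
          rw [← hy]
          exact hval (pref Vtx.p (m+1)) Vtx.p (by rw [getLast?_pref, hp]) owner0_p
        have hyq : y = Vtx.q0 ∨ y = Vtx.q1 := (E_p_iff y).mp hEy
        by_contra hne
        -- compute outcome (m+2) = c
        apply hnc (m+2)
        have hpre1 : outPrefix Gm sig0 σ1 Vtx.p (m+1) = pref Vtx.p (m+1) ++ [y] := by
          show outPrefix Gm sig0 σ1 Vtx.p m ++ [_] = _
          rw [ih, getLastD_pref, hp]
          simp only [owner0_p, Bool.false_eq_true, if_false]
          rw [hy]
        have hlen : (pref Vtx.p (m+1) ++ [y]).length = m + 2 := by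
          rw [List.length_append, length_pref]; rfl
        have hnotpre : ¬ IsPre (pref Vtx.p (m+1) ++ [y]) := by
          intro hIsPre
          rcases hIsPre with hh | hh | hh
          · rw [hlen] at hh
            have h2 : (pref Vtx.p (m+2)).getLast? = some (ppi Vtx.p (m+1)) :=
              getLast?_pref Vtx.p (m+1)
            have h3 := congrArg List.getLast? hh
            rw [List.getLast?_concat, h2] at h3
            exact hne (Option.some.inj h3)
          · rw [hlen] at hh
            have h1 : (pref Vtx.p (m+1) ++ [y]).head? = some Vtx.p := by
              rw [List.head?_append, head?_pref]; rfl
            have h2 : (pref Vtx.q0 (m+2)).head? = some Vtx.q0 :=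
              head?_pref Vtx.q0 (m+1)
            rw [hh, h2] at h1
            simp at h1
          · rw [hlen] at hh
            have h1 : (pref Vtx.p (m+1) ++ [y]).head? = some Vtx.p := by
              rw [List.head?_append, head?_pref]; rfl
            have h2 : (pref Vtx.q1 (m+2)).head? = some Vtx.q1 :=
              head?_pref Vtx.q1 (m+1)
            rw [hh, h2] at h1
            simp at h1
        have howy : Gm.owner0 y = true := by rcases hyq with rfl | rfl <;> rfl
        unfold outcome
        show (outPrefix Gm sig0 σ1 Vtx.p (m+1) ++ [_]).getLastD Vtx.p = Vtx.c
        rw [List.getLastD_concat, hpre1, List.getLastD_concat, howy, if_pos rfl]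
        rcases hyq with rfl | rfl
        · rw [sig0_last_q0 List.getLast?_concat, if_neg hnotpre]
        · rw [sig0_last_q1 List.getLast?_concat, if_neg hnotpre]
      · have ho : Gm.owner0 (ppi Vtx.p m) = true := by
          rcases ppi_cases goodp m with h | h | h
          · exact absurd h hp
          · rw [h]; rfl
          · rw [h]; rfl
        rw [ho]
        simp only [if_true]
        rw [sig0_good goodp m hp, ppi_after_q goodp hp]

/-- Extraction of σ1's decisions when it follows the intended play. -/
lemma decisions (σ1 : Strat Vtx)
    (hfollow : ∀ n, outPrefix Gm sig0 σ1 Vtx.p n = pref Vtx.p (n+1)) (k : ℕ) :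
    σ1 (pref Vtx.p (2*k+1)) = bq (rho k) := by
  have hp : ppi Vtx.p (2*k) = Vtx.p := by
    rw [ppi_p, if_pos (by omega)]
  have h1 : outPrefix Gm sig0 σ1 Vtx.p (2*k+1)
      = outPrefix Gm sig0 σ1 Vtx.p (2*k) ++ [σ1 (pref Vtx.p (2*k+1))] := by
    show outPrefix Gm sig0 σ1 Vtx.p (2*k) ++ [_] = _
    rw [hfollow (2*k), getLastD_pref, hp]
    simp only [owner0_p, Bool.false_eq_true, if_false]
  rw [hfollow (2*k+1), hfollow (2*k), pref_succ Vtx.p (2*k+1)] at h1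
  have := (List.append_cancel_left h1).symm
  simp only [List.cons.injEq] at this
  rw [this.1, ppi_p, if_neg (by omega)]
  congr 1
  congr 1
  omega

lemma rho_sq (K : ℕ) : rho (K*K) = true := by
  simp [rho, Nat.sqrt_eq]

lemma rho_nonsq {m K : ℕ} (h1 : K*K < m) (h2 : m < (K+1)*(K+1)) : rho m = false := by
  have hub : Nat.sqrt m < K + 1 := Nat.sqrt_lt.mpr h2
  have hlb : K ≤ Nat.sqrt m := Nat.le_sqrt.mpr (le_of_lt h1)
  have hs : Nat.sqrt m = K := by omega
  simp only [rho, hs, beq_eq_false_iff_ne, ne_eq]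
  omega

lemma rho_not_evper (i d : ℕ) (hd : 0 < d)
    (hper : ∀ k, i ≤ k → rho (k + d) = rho k) : False := by
  set K := max i d + 1 with hK
  have hdK : d < K := by have := Nat.le_max_right i d; omega
  have hiK : i < K := by have := Nat.le_max_left i d; omega
  have hKsq : K ≤ K * K := Nat.le_mul_of_pos_left K (by omega)
  have h1 : rho (K*K) = true := rho_sq K
  have h2 : rho (K*K + d) = false :=
    rho_nonsq (K := K) (by omega) (by nlinarith)
  have := hper (K*K) (by omega)
  rw [h1, h2] at this
  simp at this

/-- No finite-memory strategy can produce the decisions `bq ∘ rho`. -/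
lemma no_finmem (σ1 : Strat Vtx)
    (hdec : ∀ k, σ1 (pref Vtx.p (2*k+1)) = bq (rho k)) (hFM : FinMem σ1) : False := by
  obtain ⟨M, fM, m0, upd, o, ho⟩ := hFM
  haveI : Fintype M := fM
  set s : ℕ → M := fun k => (pref Vtx.p (2*k+1)).foldl upd m0 with hs
  set F : M → M := fun m => upd (upd m (o m)) Vtx.p with hF
  have hos : ∀ k, o (s k) = bq (rho k) := by
    intro k
    rw [← ho (pref Vtx.p (2*k+1))]
    exact hdec k
  have hstep : ∀ k, s (k+1) = F (s k) := by
    intro k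
    have e1 : 2*(k+1)+1 = (2*k+1) + 1 + 1 := by ring
    have hodd : ppi Vtx.p (2*k+1) = bq (rho k) := by
      rw [ppi_p, if_neg (by omega)]
      congr 1; congr 1; omega
    have heven : ppi Vtx.p (2*k+1+1) = Vtx.p := by
      rw [ppi_p, if_pos (by omega)]
    show (pref Vtx.p (2*(k+1)+1)).foldl upd m0 = F (s k)
    rw [e1, pref_succ, pref_succ, hodd, heven, List.foldl_append, List.foldl_append]
    show upd (upd ((pref Vtx.p (2*k+1)).foldl upd m0) (bq (rho k))) Vtx.p = _
    rw [← hos k]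
  have hiter : ∀ k, s k = F^[k] (s 0) := by
    intro k
    induction k with
    | zero => rfl
    | succ l ih => rw [hstep l, ih, Function.iterate_succ_apply']
  obtain ⟨i, j, hij, hsij⟩ := Finite.exists_ne_map_eq_of_infinite s
  have main : ∀ a b : ℕ, a < b → s a = s b → False := by
    intro a b hab hsab
    have hper : ∀ k, a ≤ k → s (k + (b - a)) = s k := by
      intro k hk
      have e : k + (b - a) = (k - a) + b := by omega
      rw [hiter (k + (b - a)), hiter k, e, Function.iterate_add_apply]
      rw [show F^[b] (s 0) = F^[a] (s 0) from by rw [← hiter b, ← hiter a, hsab]]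
      rw [← Function.iterate_add_apply]
      congr 1
      omega
    apply rho_not_evper a (b - a) (by omega)
    intro k hk
    apply bq_inj
    rw [← hos, ← hos, hper k hk]
  rcases hij.lt_or_gt with h | h
  · exact main i j h hsij
  · exact main j i h hsij.symm
end Stmt14Aux

/-- there is a game, an ε > 0 and a Player-0 strategy whose set of
ε-best responses is nonempty but contains no finite-memory strategy. -/
theorem stmt14 :
    ∃ (V : Type) (_ : Fintype V) (G : MPG.Game V) (ε : ℝ) (σ0 : MPG.Strat V),
      0 < ε ∧ G.Valid0 σ0 ∧ (MPG.BR G ε σ0).Nonempty ∧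
        ∀ σ1 ∈ MPG.BR G ε σ0, ¬ MPG.FinMem σ1 := by
  classical
  refine ⟨Stmt14Aux.Vtx, inferInstance, Stmt14Aux.Gm, 1/2, Stmt14Aux.sig0,
    by norm_num, Stmt14Aux.valid0_sig0, ⟨Stmt14Aux.sig1, ?_⟩, ?_⟩
  · -- sig1 is an ε-best response
    refine ⟨Stmt14Aux.valid1_sig1, ?_⟩
    intro v σ1' hσ1'
    have key : ∀ w : Stmt14Aux.Vtx, Stmt14Aux.Good w →
        MPG.mp Stmt14Aux.Gm.w1 (MPG.outcome Stmt14Aux.Gm Stmt14Aux.sig0 Stmt14Aux.sig1 w)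
          = 1 := by
      intro w hw
      have h : MPG.outcome Stmt14Aux.Gm Stmt14Aux.sig0 Stmt14Aux.sig1 w = Stmt14Aux.ppi w :=
        funext (Stmt14Aux.outcome_sig1 hw)
      rw [h]
      exact Stmt14Aux.mp_one_of _ (Stmt14Aux.ppi_ne_c hw)
    cases v with
    | c =>
        have h1 : MPG.mp Stmt14Aux.Gm.w1
            (MPG.outcome Stmt14Aux.Gm Stmt14Aux.sig0 Stmt14Aux.sig1 Stmt14Aux.Vtx.c) = 0 :=
          Stmt14Aux.mp_zero_of _ 0 (fun n _ => Stmt14Aux.outcome_from_c Stmt14Aux.sig1 n)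
        have h2 : MPG.mp Stmt14Aux.Gm.w1
            (MPG.outcome Stmt14Aux.Gm Stmt14Aux.sig0 σ1' Stmt14Aux.Vtx.c) = 0 :=
          Stmt14Aux.mp_zero_of _ 0 (fun n _ => Stmt14Aux.outcome_from_c σ1' n)
        rw [h1, h2]; norm_num
    | p =>
        have h2 := Stmt14Aux.mp_le_one
          (MPG.outcome Stmt14Aux.Gm Stmt14Aux.sig0 σ1' Stmt14Aux.Vtx.p)
        rw [key _ (Or.inl rfl)]; linarith
    | q0 =>
        have h2 := Stmt14Aux.mp_le_one
          (MPG.outcome Stmt14Aux.Gm Stmt14Aux.sig0 σ1' Stmt14Aux.Vtx.q0)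
        rw [key _ (Or.inr (Or.inl rfl))]; linarith
    | q1 =>
        have h2 := Stmt14Aux.mp_le_one
          (MPG.outcome Stmt14Aux.Gm Stmt14Aux.sig0 σ1' Stmt14Aux.Vtx.q1)
        rw [key _ (Or.inr (Or.inr rfl))]; linarith
  · -- no ε-best response has finite memory
    rintro σ1 ⟨hval, hbest⟩ hFM
    have hb := hbest Stmt14Aux.Vtx.p Stmt14Aux.sig1 Stmt14Aux.valid1_sig1
    have h1 : MPG.mp Stmt14Aux.Gm.w1
        (MPG.outcome Stmt14Aux.Gm Stmt14Aux.sig0 Stmt14Aux.sig1 Stmt14Aux.Vtx.p) = 1 := by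
      have h : MPG.outcome Stmt14Aux.Gm Stmt14Aux.sig0 Stmt14Aux.sig1 Stmt14Aux.Vtx.p
          = Stmt14Aux.ppi Stmt14Aux.Vtx.p := funext (Stmt14Aux.outcome_sig1 Stmt14Aux.goodp)
      rw [h]
      exact Stmt14Aux.mp_one_of _ (Stmt14Aux.ppi_ne_c Stmt14Aux.goodp)
    rw [h1] at hb
    by_cases hc : ∃ m, MPG.outcome Stmt14Aux.Gm Stmt14Aux.sig0 σ1 Stmt14Aux.Vtx.p m
        = Stmt14Aux.Vtx.c
    · obtain ⟨m, hm⟩ := hc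
      have h0 : MPG.mp Stmt14Aux.Gm.w1
          (MPG.outcome Stmt14Aux.Gm Stmt14Aux.sig0 σ1 Stmt14Aux.Vtx.p) = 0 :=
        Stmt14Aux.mp_zero_of _ m (fun n hn =>
          Stmt14Aux.outcome_c_absorb σ1 Stmt14Aux.Vtx.p m hm n hn)
      rw [h0] at hb
      norm_num at hb
    · push_neg at hc
      exact Stmt14Aux.no_finmem σ1
        (Stmt14Aux.decisions σ1 (Stmt14Aux.follow_of_no_c σ1 hval hc)) hFM
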